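/- arXiv:2008.01164 — 3 statements merged into one kernel-verified Lean document; each statement's English description precedes it below -/
import Mathlib

section
/- A permutation of length n avoids the pattern 231 if and only if the classical stack-sorting map s sends it to the identity permutation. -/
open List

attribute [local instance] Classical.propDecidable

/-- `u` is order-isomorphic to `v`. -/
def OrdIso (u v : List ℕ) : Prop :=
  u.length = v.length ∧
    ∀ i j, i < u.length → j < u.length →
      (u.getD i 0 < u.getD j 0 ↔ v.getD i 0 < v.getD j 0)

/-- The word `w` contains the pattern `p`. -/
def Contains (w p : List ℕ) : Prop :=
  ∃ u, u.Sublist w ∧ OrdIso u p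

/-- The word `w` avoids every pattern in `T`. -/
def AvoidsSet (T : Set (List ℕ)) (w : List ℕ) : Prop :=
  ∀ p ∈ T, ¬ Contains w p

/-- One step of the `T`-avoiding stack machine: state is (input, stack, output);
the stack is read top to bottom (head is the top). -/
noncomputable def sTaux (T : Set (List ℕ)) : List ℕ → List ℕ → List ℕ → List ℕ
  | [], stack, out => out ++ stack
  | x :: rest, stack, out =>
    if AvoidsSet T (x :: stack) then sTaux T rest (x :: stack) out
    else
      match stack with
      | [] => sTaux T rest [x] out
      | y :: s => sTaux T (x :: rest) s (out ++ [y])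
termination_by input stack _ => 2 * input.length + stack.length
decreasing_by all_goals first | (simp_wf; omega) | omega | simp_wf

/-- The stack-sorting map `s_T`. -/
noncomputable def sT (T : Set (List ℕ)) (w : List ℕ) : List ℕ := sTaux T w [] []

/-- `w` is a permutation of `{1, …, w.length}`. -/
def IsPermList (w : List ℕ) : Prop := w.Perm (List.range' 1 w.length)

/-- `T` is reduced: no element of `T` contains another element of `T`. -/
def Reduced (T : Set (List ℕ)) : Prop :=
  ∀ σ ∈ T, ∀ τ ∈ T, σ ≠ τ → ¬ Contains σ τ

/-- `σ̂`: swap the first two entries of `σ`. -/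
def hat : List ℕ → List ℕ
  | a :: b :: t => b :: a :: t
  | l => l

/-! ### Auxiliary lemmas -/

lemma contains21_iff (w : List ℕ) :
    Contains w [2,1] ↔ ∃ a b, b < a ∧ [a,b] <+ w := by
  constructor
  · rintro ⟨u, hu, hlen, hiff⟩
    match u, hlen with
    | [a,b], _ =>
      refine ⟨a, b, ?_, hu⟩
      have := hiff 1 0 (by simp) (by simp)
      simpa using this.mpr (by norm_num)
  · rintro ⟨a, b, hab, hsub⟩
    refine ⟨[a,b], hsub, rfl, ?_⟩
    intro i j hi hj
    simp only [length_cons, length_nil] at hi hj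
    interval_cases i <;> interval_cases j <;> simp [List.getD] <;> omega

lemma contains231_iff (w : List ℕ) :
    Contains w [2,3,1] ↔ ∃ a b c, a < b ∧ c < a ∧ [a,b,c] <+ w := by
  constructor
  · rintro ⟨u, hu, hlen, hiff⟩
    match u, hlen with
    | [a,b,c], _ =>
      refine ⟨a, b, c, ?_, ?_, hu⟩
      · have := hiff 0 1 (by simp) (by simp)
        simpa using this.mpr (by norm_num)
      · have := hiff 2 0 (by simp) (by simp)
        simpa using this.mpr (by norm_num)
  · rintro ⟨a, b, c, h1, h2, hsub⟩
    refine ⟨[a,b,c], hsub, rfl, ?_⟩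
    intro i j hi hj
    simp only [length_cons, length_nil] at hi hj
    interval_cases i <;> interval_cases j <;> simp [List.getD] <;> omega

lemma avoids_iff_sorted (w : List ℕ) :
    AvoidsSet {[2,1]} w ↔ w.Pairwise (· ≤ ·) := by
  have : AvoidsSet {[2,1]} w ↔ ¬ Contains w [2,1] := by
    constructor
    · intro h; exact h _ rfl
    · intro h p hp; rw [Set.mem_singleton_iff] at hp; subst hp; exact h
  rw [this, contains21_iff]
  rw [List.pairwise_iff_forall_sublist]
  constructor
  · intro h a b hs
    by_contra hc
    exact h ⟨a, b, by omega, hs⟩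
  · rintro h ⟨a, b, hab, hs⟩
    exact absurd (h hs) (by omega)

/-- Machine step lemmas. -/
lemma sTaux_nil (S o : List ℕ) : sTaux {[2,1]} [] S o = o ++ S := by
  simp [sTaux]

lemma sTaux_push (x : ℕ) (r S o : List ℕ) (h : Pairwise (· ≤ ·) (x :: S)) :
    sTaux {[2,1]} (x::r) S o = sTaux {[2,1]} r (x::S) o := by
  rw [sTaux.eq_def]
  simp [(avoids_iff_sorted _).mpr h]

lemma sTaux_pop (x y : ℕ) (r S o : List ℕ) (h : ¬ Pairwise (· ≤ ·) (x :: y :: S)) :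
    sTaux {[2,1]} (x::r) (y::S) o = sTaux {[2,1]} (x::r) S (o ++ [y]) := by
  have h' : ¬ AvoidsSet {[2,1]} (x :: y :: S) := fun hh => h ((avoids_iff_sorted _).mp hh)
  rw [sTaux.eq_def]
  simp [h']

lemma sTaux_out : ∀ input S o, sTaux {[2,1]} input S o = o ++ sTaux {[2,1]} input S [] := by
  have key : ∀ k, ∀ input S : List ℕ, 2 * input.length + S.length ≤ k →
      ∀ o, sTaux {[2,1]} input S o = o ++ sTaux {[2,1]} input S [] := by
    intro k
    induction k using Nat.strong_induction_on with
    | _ k IH =>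
      intro input S hm o
      match input with
      | [] => simp [sTaux_nil]
      | x :: r =>
        by_cases h : Pairwise (· ≤ ·) (x :: S)
        · rw [sTaux_push _ _ _ _ h, sTaux_push _ _ _ _ h]
          rcases k with _ | k'
          · simp at hm
          · rw [IH k' (by omega) r (x::S) (by simp at hm ⊢; omega) o]
        · match S with
          | [] => exact absurd (pairwise_singleton _ x) h
          | y :: S' =>
            rcases k with _ | k'
            · simp at hm
            rw [sTaux_pop _ _ _ _ _ h, sTaux_pop _ _ _ _ _ h,
              IH k' (by omega) (x::r) S' (by simp at hm ⊢; omega) (o ++ [y]),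
              IH k' (by omega) (x::r) S' (by simp at hm ⊢; omega) ([] ++ [y])]
            simp
  intro input S o
  exact key _ input S le_rfl o

lemma sTaux_perm : ∀ input S : List ℕ, sTaux {[2,1]} input S [] ~ S ++ input := by
  have key : ∀ k, ∀ input S : List ℕ, 2 * input.length + S.length ≤ k →
      sTaux {[2,1]} input S [] ~ S ++ input := by
    intro k
    induction k using Nat.strong_induction_on with
    | _ k IH =>
      intro input S hm
      match input with
      | [] => simp [sTaux_nil]
      | x :: r =>
        rcases k with _ | k'
        · simp at hm
        by_cases h : Pairwise (· ≤ ·) (x :: S)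
        · rw [sTaux_push _ _ _ _ h]
          refine (IH k' (by omega) r (x::S) (by simp at hm ⊢; omega)).trans ?_
          exact List.perm_middle.symm
        · match S with
          | [] => exact absurd (pairwise_singleton _ x) h
          | y :: S' =>
            rw [sTaux_pop _ _ _ _ _ h, sTaux_out]
            have := IH k' (by omega) (x::r) S' (by simp at hm ⊢; omega)
            calc ([] ++ [y]) ++ sTaux {[2,1]} (x::r) S' []
                ~ [y] ++ (S' ++ (x::r)) := by simpa using this
              _ = (y :: S') ++ (x::r) := by simp
  intro input S
  exact key _ input S le_rfl

lemma sorted_cons_iff {x : ℕ} {l : List ℕ} :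
    Pairwise (· ≤ ·) (x :: l) ↔ (∀ y ∈ l, x ≤ y) ∧ Pairwise (· ≤ ·) l := by
  simp [List.pairwise_cons]

/-- If everything in `input` and `T` is below everything in `B`, the bottom part `B`
of the stack is inert. -/
lemma sTaux_bottom : ∀ input T B : List ℕ, Pairwise (· ≤ ·) (T ++ B) →
    (∀ a ∈ input, ∀ b ∈ B, a < b) → (∀ a ∈ T, ∀ b ∈ B, a < b) →
    sTaux {[2,1]} input (T ++ B) [] = sTaux {[2,1]} input T [] ++ B := by
  have key : ∀ k, ∀ input T B : List ℕ, 2 * input.length + T.length ≤ k →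
      Pairwise (· ≤ ·) (T ++ B) →
      (∀ a ∈ input, ∀ b ∈ B, a < b) → (∀ a ∈ T, ∀ b ∈ B, a < b) →
      sTaux {[2,1]} input (T ++ B) [] = sTaux {[2,1]} input T [] ++ B := by
    intro k
    induction k using Nat.strong_induction_on with
    | _ k IH =>
      intro input T B hm hsort hin hT
      match input with
      | [] => simp [sTaux_nil]
      | x :: r =>
        rcases k with _ | k'
        · simp at hm
        have hTsort : Pairwise (· ≤ ·) T := hsort.sublist (List.sublist_append_left _ _)
        have hcond : Pairwise (· ≤ ·) (x :: (T ++ B)) ↔ Pairwise (· ≤ ·) (x :: T) := by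
          rw [sorted_cons_iff, sorted_cons_iff]
          constructor
          · rintro ⟨h1, _⟩
            exact ⟨fun y hy => h1 y (by simp [hy]), hTsort⟩
          · rintro ⟨h1, _⟩
            refine ⟨fun y hy => ?_, hsort⟩
            rcases List.mem_append.mp hy with hy | hy
            · exact h1 y hy
            · exact le_of_lt (hin x (by simp) y hy)
        by_cases h : Pairwise (· ≤ ·) (x :: T)
        · have h' : Pairwise (· ≤ ·) (x :: (T ++ B)) := hcond.mpr h
          rw [show x :: (T ++ B) = (x :: T) ++ B from rfl] at h'
          rw [sTaux_push _ _ _ _ (by rwa [show (x :: T) ++ B = x :: (T ++ B) from rfl] at h'),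
            sTaux_push _ _ _ _ h]
          exact IH k' (by omega) r (x::T) B (by simp at hm ⊢; omega) h'
            (fun a ha => hin a (by simp [ha]))
            (by
              intro a ha b hb
              rcases List.mem_cons.mp ha with rfl | ha
              · exact hin a (by simp) b hb
              · exact hT a ha b hb)
        · have h' : ¬ Pairwise (· ≤ ·) (x :: (T ++ B)) := fun hh => h (hcond.mp hh)
          match T with
          | [] => exact absurd (pairwise_singleton _ x) h
          | y :: T' =>
            rw [show (y :: T') ++ B = y :: (T' ++ B) from rfl] at h' ⊢
            rw [sTaux_pop _ _ _ _ _ h', sTaux_pop _ _ _ _ _ h,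
              sTaux_out (x::r) (T' ++ B) ([] ++ [y]), sTaux_out (x::r) T' ([] ++ [y]),
              IH k' (by omega) (x::r) T' B (by simp at hm ⊢; omega)
                (hsort.sublist (by simp))
                hin (fun a ha => hT a (by simp [ha]))]
            simp
  intro input T B h1 h2 h3
  exact key _ input T B le_rfl h1 h2 h3

/-- Splitting the run at a maximal entry `n`. -/
lemma sTaux_split (n : ℕ) (R : List ℕ) : ∀ L S : List ℕ, Pairwise (· ≤ ·) S →
    (∀ a ∈ L, a < n) → (∀ a ∈ S, a < n) →
    sTaux {[2,1]} (L ++ n :: R) S [] = sTaux {[2,1]} L S [] ++ sTaux {[2,1]} R [n] [] := by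
  have key : ∀ k, ∀ L S : List ℕ, 2 * L.length + S.length ≤ k →
      Pairwise (· ≤ ·) S → (∀ a ∈ L, a < n) → (∀ a ∈ S, a < n) →
      sTaux {[2,1]} (L ++ n :: R) S [] = sTaux {[2,1]} L S [] ++ sTaux {[2,1]} R [n] [] := by
    intro k
    induction k using Nat.strong_induction_on with
    | _ k IH =>
      intro L S hm hsort hL hS
      match L with
      | [] =>
        match S with
        | [] =>
          rw [List.nil_append, sTaux_push _ _ _ _ (pairwise_singleton _ n), sTaux_nil]
          simp
        | y :: S' =>
          rcases k with _ | k'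
          · simp at hm
          have hns : ¬ Pairwise (· ≤ ·) (n :: y :: S') := by
            rw [sorted_cons_iff]
            rintro ⟨h1, _⟩
            exact absurd (h1 y (by simp)) (by have := hS y (by simp); omega)
          rw [List.nil_append, sTaux_pop _ _ _ _ _ hns, sTaux_out,
            show ([] ++ [y] : List ℕ) = [y] from rfl]
          have := IH k' (by omega) [] S' (by simp at hm ⊢; omega)
            (hsort.sublist (by simp)) (by simp) (fun a ha => hS a (by simp [ha]))
          rw [List.nil_append] at this
          rw [this, sTaux_nil, sTaux_nil]
          simp
      | x :: L' =>
        rcases k with _ | k'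
        · simp at hm
        by_cases h : Pairwise (· ≤ ·) (x :: S)
        · rw [List.cons_append, sTaux_push _ _ _ _ h, sTaux_push _ _ _ _ h]
          exact IH k' (by omega) L' (x::S) (by simp at hm ⊢; omega) h
            (fun a ha => hL a (by simp [ha]))
            (by
              intro a ha
              rcases List.mem_cons.mp ha with rfl | ha
              · exact hL a (by simp)
              · exact hS a ha)
        · match S with
          | [] => exact absurd (pairwise_singleton _ x) h
          | y :: S' =>
            rw [List.cons_append, sTaux_pop _ _ _ _ _ h, sTaux_pop _ _ _ _ _ h,
              sTaux_out (x :: (L' ++ n :: R)) S' ([] ++ [y]), sTaux_out (x::L') S' ([] ++ [y]),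
              show x :: (L' ++ n :: R) = (x :: L') ++ n :: R from rfl,
              IH k' (by omega) (x::L') S' (by simp at hm ⊢; omega)
                (hsort.sublist (by simp)) hL (fun a ha => hS a (by simp [ha]))]
            simp
  intro L S h1 h2 h3
  exact key _ L S le_rfl h1 h2 h3

/-- Splitting containment of 231 at a maximal entry. -/
lemma contains231_split (L R : List ℕ) (m : ℕ)
    (hL : ∀ a ∈ L, a < m) (hR : ∀ a ∈ R, a < m) :
    Contains (L ++ m :: R) [2,3,1] ↔
      Contains L [2,3,1] ∨ Contains R [2,3,1] ∨ ∃ a ∈ L, ∃ b ∈ R, b < a := by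
  constructor
  · rw [contains231_iff]
    rintro ⟨a, b, c, h1, h2, hsub⟩
    rw [List.sublist_append_iff] at hsub
    obtain ⟨X, Y, hXY, hX, hY⟩ := hsub
    have hYR : ∀ Z : List ℕ, Z <+ m :: R → Z <+ R ∨ ∃ Z', Z = m :: Z' ∧ Z' <+ R := by
      intro Z hZ
      cases hZ with
      | cons a h => exact Or.inl h
      | cons_cons a h => exact Or.inr ⟨_, rfl, h⟩
    rcases X with _ | ⟨u, _ | ⟨v, _ | ⟨w, X'⟩⟩⟩
    · simp only [List.nil_append] at hXY
      subst hXY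
      rcases hYR _ hY with hY | ⟨Z', hZ, hY'⟩
      · exact Or.inr (Or.inl ((contains231_iff R).mpr ⟨a, b, c, h1, h2, hY⟩))
      · obtain ⟨rfl, rfl⟩ : a = m ∧ Z' = [b, c] := by
          constructor <;> injection hZ with e1 e2 <;> simp_all
        have hb : b ∈ R := hY'.subset (by simp)
        exact absurd h1 (by have := hR b hb; omega)
    · simp only [List.cons_append, List.nil_append] at hXY
      obtain ⟨rfl, hy⟩ : a = u ∧ [b, c] = Y := by
        injection hXY with e1 e2; exact ⟨e1, e2⟩
      have haL : a ∈ L := hX.subset (by simp)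
      rcases hYR _ (hy ▸ hY) with hY2 | ⟨Z', hZ, hY'⟩
      · have hc : c ∈ R := hY2.subset (by simp)
        exact Or.inr (Or.inr ⟨a, haL, c, hc, h2⟩)
      · obtain ⟨rfl, rfl⟩ : b = m ∧ Z' = [c] := by
          constructor <;> injection hZ with e1 e2 <;> simp_all
        have hc : c ∈ R := hY'.subset (by simp)
        exact Or.inr (Or.inr ⟨a, haL, c, hc, h2⟩)
    · simp only [List.cons_append, List.nil_append] at hXY
      obtain ⟨rfl, rfl, hy⟩ : a = u ∧ b = v ∧ [c] = Y := by
        injection hXY with e1 e2; injection e2 with e3 e4; exact ⟨e1, e3, e4⟩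
      have haL : a ∈ L := hX.subset (by simp)
      rcases hYR _ (hy ▸ hY) with hY2 | ⟨Z', hZ, hY'⟩
      · have hc : c ∈ R := hY2.subset (by simp)
        exact Or.inr (Or.inr ⟨a, haL, c, hc, h2⟩)
      · obtain ⟨rfl, -⟩ : c = m ∧ Z' = [] := by
          constructor <;> injection hZ with e1 e2 <;> simp_all
        exact absurd (hL a haL) (by omega)
    · simp only [List.cons_append] at hXY
      obtain ⟨rfl, rfl, rfl, hrest⟩ : a = u ∧ b = v ∧ c = w ∧ ([] : List ℕ) = X' ++ Y := by
        injection hXY with e1 e2; injection e2 with e3 e4; injection e4 with e5 e6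
        exact ⟨e1, e3, e5, e6⟩
      obtain ⟨rfl, rfl⟩ := (List.append_eq_nil_iff).mp hrest.symm
      exact Or.inl ((contains231_iff L).mpr ⟨a, b, c, h1, h2, by simpa using hX⟩)
  · rintro (h | h | ⟨a, ha, b, hb, hab⟩)
    · obtain ⟨u, hu, hiso⟩ := h
      exact ⟨u, hu.trans (List.sublist_append_left _ _), hiso⟩
    · obtain ⟨u, hu, hiso⟩ := h
      exact ⟨u, hu.trans ((List.sublist_cons_self _ _).trans
        (List.sublist_append_right _ _)), hiso⟩
    · refine (contains231_iff _).mpr ⟨a, m, b, hL a ha, hab, ?_⟩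
      have h1 : [a] <+ L := List.singleton_sublist.mpr ha
      have h2 : [m, b] <+ m :: R := List.cons_sublist_cons.mpr (List.singleton_sublist.mpr hb)
      simpa using h1.append h2

lemma exists_max : ∀ w : List ℕ, w ≠ [] → ∃ m ∈ w, ∀ b ∈ w, b ≤ m := by
  intro w
  induction w with
  | nil => simp
  | cons a l IHl =>
    intro _
    rcases eq_or_ne l [] with rfl | h
    · exact ⟨a, by simp⟩
    · obtain ⟨m, hm, hmax⟩ := IHl h
      rcases le_total a m with hle | hle
      · refine ⟨m, by simp [hm], ?_⟩
        intro b hb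
        rcases List.mem_cons.mp hb with rfl | hb
        · exact hle
        · exact hmax b hb
      · refine ⟨a, by simp, ?_⟩
        intro b hb
        rcases List.mem_cons.mp hb with rfl | hb
        · exact le_rfl
        · exact (hmax b hb).trans hle

lemma main_aux : ∀ k, ∀ w : List ℕ, w.length ≤ k → w.Nodup →
    (¬ Contains w [2,3,1] ↔ Pairwise (· < ·) (sTaux {[2,1]} w [] [])) := by
  intro k
  induction k using Nat.strong_induction_on with
  | _ k IH =>
    intro w hlen hnd
    rcases eq_or_ne w [] with rfl | hne
    · rw [contains231_iff]
      simp [sTaux_nil]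
    · obtain ⟨m, hmem, hmax⟩ := exists_max w hne
      obtain ⟨L, R, rfl⟩ := List.append_of_mem hmem
      rw [List.nodup_append] at hnd
      obtain ⟨hndL, hndmR, hdisj⟩ := hnd
      have hndR : R.Nodup := (List.nodup_cons.mp hndmR).2
      have hmR : m ∉ R := (List.nodup_cons.mp hndmR).1
      have hL : ∀ a ∈ L, a < m := by
        intro a ha
        have h1 : a ≤ m := hmax a (by simp [ha])
        have h2 : a ≠ m := by
          rintro rfl
          exact hdisj a ha a (by simp) rfl
        omega
      have hR : ∀ a ∈ R, a < m := by
        intro a ha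
        have h1 : a ≤ m := hmax a (by simp [ha])
        have h2 : a ≠ m := by rintro rfl; exact hmR ha
        omega
      have hcross : ∀ a ∈ L, ∀ b ∈ R, a ≠ b := by
        intro a ha b hb hab
        exact hdisj a ha b (List.mem_cons_of_mem _ hb) hab
      have hFLp : sTaux {[2,1]} L [] [] ~ L := by simpa using sTaux_perm L []
      have hFRp : sTaux {[2,1]} R [] [] ~ R := by simpa using sTaux_perm R []
      have heq : sTaux {[2,1]} (L ++ m :: R) [] [] =
          sTaux {[2,1]} L [] [] ++ (sTaux {[2,1]} R [] [] ++ [m]) := by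
        rw [sTaux_split m R L [] List.Pairwise.nil hL (by simp)]
        congr 1
        have := sTaux_bottom R [] [m] (by simp)
          (fun a ha b hb => by
            simp only [List.mem_singleton] at hb
            subst hb; exact hR a ha) (by simp)
        simpa using this
      have hlen' : L.length + R.length + 1 ≤ k := by
        simp only [List.length_append, List.length_cons] at hlen; omega
      rcases k with _ | k'
      · omega
      have IHL := IH k' (by omega) L (by omega) hndL
      have IHR := IH k' (by omega) R (by omega) hndR
      rw [heq, contains231_split L R m hL hR]
      rw [show Pairwise (· < ·) (sTaux {[2,1]} L [] [] ++ (sTaux {[2,1]} R [] [] ++ [m])) =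
        Pairwise (· < ·) (sTaux {[2,1]} L [] [] ++ (sTaux {[2,1]} R [] [] ++ [m])) from rfl,
        List.pairwise_append, List.pairwise_append]
      constructor
      · intro h
        push_neg at h
        obtain ⟨h1, h2, h3⟩ := h
        refine ⟨IHL.mp h1, ⟨IHR.mp h2, by simp, ?_⟩, ?_⟩
        · intro a ha b hb
          simp only [List.mem_singleton] at hb
          subst hb
          exact hR a (hFRp.subset ha)
        · intro a ha b hb
          have haL : a ∈ L := hFLp.subset ha
          rcases List.mem_append.mp hb with hb | hb
          · have hbR : b ∈ R := hFRp.subset hb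
            have e1 := h3 a haL b hbR
            have e2 := hcross a haL b hbR
            omega
          · simp only [List.mem_singleton] at hb
            subst hb
            exact hL a haL
      · rintro ⟨s1, ⟨s2, -, -⟩, s3⟩
        push_neg
        refine ⟨IHL.mpr s1, IHR.mpr s2, ?_⟩
        intro a ha b hb
        have := s3 a (hFLp.mem_iff.mpr ha) b
          (List.mem_append.mpr (Or.inl (hFRp.mem_iff.mpr hb)))
        omega

/-- A permutation avoids 231 iff classical stack sort (the 21-avoiding stack) sends
it to the identity. -/
theorem stmt0 (n : ℕ) (π : List ℕ) (hπ : IsPermList π) (hlen : π.length = n) :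
    ¬ Contains π [2,3,1] ↔ sT {[2,1]} π = List.range' 1 n := by
  subst hlen
  have hnd : π.Nodup := hπ.nodup_iff.mpr List.nodup_range'
  have main := main_aux π.length π le_rfl hnd
  have hperm : sTaux {[2,1]} π [] [] ~ List.range' 1 π.length :=
    (by simpa using sTaux_perm π [] : sTaux {[2,1]} π [] [] ~ π).trans hπ
  have hrs : Pairwise (· < ·) (List.range' 1 π.length) := List.pairwise_lt_range'
  haveI : IsAntisymm ℕ (· < ·) := ⟨fun a b h h' => absurd h' (lt_asymm h)⟩
  rw [show sT {[2,1]} π = sTaux {[2,1]} π [] [] from rfl, main]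
  constructor
  · intro hs
    exact hperm.eq_of_pairwise (fun a b _ _ h h' => absurd h' (lt_asymm h)) hs hrs
  · intro h
    rw [h]
    exact hrs
end

section
/- If T is a set of permutations all of length at least k, then every permutation of length n > k has at most C_{n−k+2} preimages under s_T, where C_m denotes the m-th Catalan number. -/
open List

attribute [local instance] Classical.propDecidable

/-- The trace of the machine: `true` = push, `false` = pop. -/
noncomputable def trace6 (T : Set (List ℕ)) : List ℕ → List ℕ → List Bool
  | [], _ => []
  | x :: rest, stack =>
    if AvoidsSet T (x :: stack) then true :: trace6 T rest (x :: stack)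
    else
      match stack with
      | [] => true :: trace6 T rest [x]
      | _ :: s => false :: trace6 T (x :: rest) s
termination_by input stack => 2 * input.length + stack.length
decreasing_by all_goals first | (simp_wf; omega) | omega | simp_wf

/-- Replay a list of operations deterministically. -/
def applyOps : List Bool → List ℕ → List ℕ → List ℕ
  | [], _, stack => stack
  | true :: ops, input, stack => applyOps ops input.tail (input.headD 0 :: stack)
  | false :: ops, input, stack => stack.headD 0 :: applyOps ops input stack.tail

inductive ValidOps (j : ℕ) : List Bool → ℕ → ℕ → Prop
  | nil : ∀ s, ValidOps j [] 0 s
  | push : ∀ ops u s, ValidOps j ops u (s + 1) → ValidOps j (true :: ops) (u + 1) s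
  | pop : ∀ ops u s, j ≤ s → ValidOps j ops u s → ValidOps j (false :: ops) u (s + 1)

theorem sTaux_eq_applyOps (T : Set (List ℕ)) :
    ∀ input stack out,
      sTaux T input stack out = out ++ applyOps (trace6 T input stack) input stack := by
  intro input stack out
  induction input, stack, out using sTaux.induct T with
  | case1 stack out => rw [sTaux, trace6]; rfl
  | case2 x rest stack out h ih =>
      rw [sTaux.eq_def, trace6.eq_def]
      dsimp only
      rw [if_pos h, if_pos h, ih]
      rfl
  | case3 x rest out h ih =>
      rw [sTaux.eq_def, trace6.eq_def]
      dsimp only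
      rw [if_neg h, if_neg h, ih]
      rfl
  | case4 x rest out y s h ih =>
      rw [sTaux.eq_def, trace6.eq_def]
      dsimp only
      rw [if_neg h, if_neg h, ih]
      simp [applyOps]

theorem trace6_valid (T : Set (List ℕ)) (k : ℕ) (hk : ∀ σ ∈ T, k ≤ σ.length) :
    ∀ input stack, ValidOps (k - 2) (trace6 T input stack) input.length stack.length := by
  intro input stack
  induction input, stack using trace6.induct T with
  | case1 stack => rw [trace6]; exact ValidOps.nil _
  | case2 x rest stack h ih =>
      rw [trace6.eq_def]; dsimp only; rw [if_pos h]
      exact ValidOps.push _ _ _ ih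
  | case3 x rest h ih =>
      rw [trace6.eq_def]; dsimp only; rw [if_neg h]
      exact ValidOps.push _ _ _ ih
  | case4 x rest y s h ih =>
      rw [trace6.eq_def]; dsimp only; rw [if_neg h]
      refine ValidOps.pop _ _ _ ?_ ih
      -- from ¬AvoidsSet T (x :: y :: s): some pattern of length ≥ k is contained
      have : ∃ p ∈ T, Contains (x :: y :: s) p := by
        by_contra hc
        push_neg at hc
        exact h fun p hp => hc p hp
      obtain ⟨p, hp, u, hu, hiso⟩ := this
      have h1 : k ≤ p.length := hk p hp
      have h2 : u.length ≤ (x :: y :: s).length := hu.length_le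
      have h3 : u.length = p.length := hiso.1
      simp only [length_cons] at h2
      omega
theorem trace6_ends_true (T : Set (List ℕ)) :
    ∀ input stack, input ≠ [] → ∃ l, trace6 T input stack = l ++ [true] := by
  intro input stack
  induction input, stack using trace6.induct T with
  | case1 stack => intro h; exact absurd rfl h
  | case2 x rest stack h ih =>
      intro _
      rw [trace6.eq_def]; dsimp only; rw [if_pos h]
      rcases eq_or_ne rest [] with hr | hr
      · subst hr; rw [trace6]; exact ⟨[], rfl⟩
      · obtain ⟨l, hl⟩ := ih hr; exact ⟨true :: l, by rw [hl]; rfl⟩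
  | case3 x rest h ih =>
      intro _
      rw [trace6.eq_def]; dsimp only; rw [if_neg h]
      rcases eq_or_ne rest [] with hr | hr
      · subst hr; rw [trace6]; exact ⟨[], rfl⟩
      · obtain ⟨l, hl⟩ := ih hr; exact ⟨true :: l, by rw [hl]; rfl⟩
  | case4 x rest y s h ih =>
      intro _
      rw [trace6.eq_def]; dsimp only; rw [if_neg h]
      obtain ⟨l, hl⟩ := ih (by simp)
      exact ⟨false :: l, by rw [hl]; rfl⟩

theorem ValidOps.inv_nil {j u s : ℕ} (h : ValidOps j [] u s) : u = 0 := by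
  cases h; rfl

theorem ValidOps.inv_true {j u s : ℕ} {ops : List Bool} (h : ValidOps j (true :: ops) u s) :
    0 < u ∧ ValidOps j ops (u - 1) (s + 1) := by
  cases h with
  | push ops u s hv => exact ⟨Nat.succ_pos _, by simpa using hv⟩

theorem ValidOps.inv_false {j u s : ℕ} {ops : List Bool} (h : ValidOps j (false :: ops) u s) :
    ∃ s', s = s' + 1 ∧ j ≤ s' ∧ ValidOps j ops u s' := by
  cases h with
  | pop ops u s hjs hv => exact ⟨_, rfl, hjs, hv⟩

theorem applyOps_injOn (j : ℕ) :
    ∀ (ops : List Bool) (input input' stack stack' : List ℕ),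
      ValidOps j ops input.length stack.length →
      ValidOps j ops input'.length stack'.length →
      applyOps ops input stack = applyOps ops input' stack' →
      input = input' ∧ stack = stack' := by
  intro ops
  induction ops with
  | nil =>
      intro input input' stack stack' h1 h2 he
      have e1 := h1.inv_nil
      have e2 := h2.inv_nil
      have : input = [] := List.length_eq_zero_iff.mp e1
      have : input' = [] := List.length_eq_zero_iff.mp e2
      simp_all [applyOps]
  | cons b ops ih =>
      intro input input' stack stack' h1 h2 he
      cases b
      · -- pop
        obtain ⟨s1, hs1, -, hv1⟩ := h1.inv_false
        obtain ⟨s2, hs2, -, hv2⟩ := h2.inv_false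
        obtain ⟨y, t, rfl⟩ : ∃ y t, stack = y :: t := by
          cases stack with
          | nil => simp at hs1
          | cons a b => exact ⟨a, b, rfl⟩
        obtain ⟨y', t', rfl⟩ : ∃ y t, stack' = y :: t := by
          cases stack' with
          | nil => simp at hs2
          | cons a b => exact ⟨a, b, rfl⟩
        simp only [applyOps, headD_cons, tail_cons, List.cons.injEq] at he
        obtain ⟨rfl, he⟩ := he
        simp only [length_cons, Nat.add_right_cancel_iff] at hs1 hs2
        subst hs1; subst hs2
        obtain ⟨rfl, rfl⟩ := ih input input' t t' hv1 hv2 he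
        exact ⟨rfl, rfl⟩
      · -- push
        obtain ⟨hu1, hv1⟩ := h1.inv_true
        obtain ⟨hu2, hv2⟩ := h2.inv_true
        obtain ⟨x, r, rfl⟩ : ∃ x r, input = x :: r := by
          cases input with
          | nil => simp at hu1
          | cons a b => exact ⟨a, b, rfl⟩
        obtain ⟨x', r', rfl⟩ : ∃ x r, input' = x :: r := by
          cases input' with
          | nil => simp at hu2
          | cons a b => exact ⟨a, b, rfl⟩
        simp only [applyOps, headD_cons, tail_cons] at he
        simp only [length_cons, Nat.add_sub_cancel] at hv1 hv2
        obtain ⟨rfl, hst⟩ := ih r r' (x :: stack) (x' :: stack') (by simpa using hv1) (by simpa using hv2) he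
        simp only [List.cons.injEq] at hst
        obtain ⟨rfl, rfl⟩ := hst
        exact ⟨rfl, rfl⟩
theorem ValidOps.count_true {j : ℕ} {ops : List Bool} {u s : ℕ} (h : ValidOps j ops u s) :
    ops.count true = u := by
  induction h with
  | nil s => simp
  | push ops u s hv ih => simp [count_cons, ih]
  | pop ops u s hjs hv ih => simp [count_cons, ih]

theorem ValidOps.count_false_le {j : ℕ} {ops : List Bool} {u s : ℕ} (h : ValidOps j ops u s) :
    0 < ops.count false → j + ops.count false ≤ u + s := by
  induction h with
  | nil s => simp
  | push ops u s hv ih =>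
      intro hc
      simp only [count_cons] at hc ⊢
      norm_num at hc ⊢
      have := ih (by simpa using hc)
      omega
  | pop ops u s hjs hv ih =>
      intro hc
      simp only [count_cons] at hc ⊢
      norm_num at hc ⊢
      rcases Nat.eq_zero_or_pos (ops.count false) with h0 | h0
      · omega
      · have := ih h0; omega

theorem ValidOps.count_prefix {j : ℕ} {ops : List Bool} {u s : ℕ} (h : ValidOps j ops u s) :
    ∀ i, (ops.take i).count false ≤ (ops.take i).count true + (s - j) := by
  induction h with
  | nil s => intro i; simp
  | push ops u s hv ih =>
      intro i
      cases i with
      | zero => simp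
      | succ i =>
        have := ih i
        simp only [take_succ_cons, count_cons] at this ⊢
        norm_num at this ⊢
        omega
  | pop ops u s hjs hv ih =>
      intro i
      cases i with
      | zero => simp
      | succ i =>
        have := ih i
        simp only [take_succ_cons, count_cons] at this ⊢
        norm_num at this ⊢
        omega

theorem ValidOps.take_eq_replicate {j : ℕ} {ops : List Bool} {u s : ℕ} (h : ValidOps j ops u s) :
    j - s ≤ u → ops.take (j - s) = List.replicate (j - s) true := by
  induction h with
  | nil s => intro hle; simp only [Nat.le_zero] at hle; simp [hle]
  | push ops u s hv ih =>
      intro hle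
      rcases Nat.eq_zero_or_pos (j - s) with h0 | h0
      · simp [h0]
      · have hstep : j - s = (j - (s + 1)) + 1 := by omega
        rw [hstep, take_succ_cons, replicate_succ]
        congr 1
        exact ih (by omega)
  | pop ops u s hjs hv ih =>
      intro _
      have : j - (s + 1) = 0 := by omega
      simp [this]

theorem ValidOps.drop_replicate {j : ℕ} :
    ∀ (i : ℕ) {rest : List Bool} {u s : ℕ},
      ValidOps j (List.replicate i true ++ rest) u s → ValidOps j rest (u - i) (s + i) := by
  intro i
  induction i with
  | zero => intro rest u s h; simpa using h
  | succ i ih =>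
      intro rest u s h
      rw [replicate_succ, cons_append] at h
      obtain ⟨hu, hv⟩ := h.inv_true
      have he : u - (i + 1) = u - 1 - i := by omega
      have he2 : s + (i + 1) = s + 1 + i := by omega
      rw [he, he2]
      exact ih hv
open DyckStep in
theorem replicate_pad_inj :
    ∀ (a : ℕ) {b : ℕ} {x y : List DyckStep},
      List.replicate a D ++ U :: x = List.replicate b D ++ U :: y → a = b ∧ x = y := by
  intro a
  induction a with
  | zero =>
      intro b x y h
      cases b with
      | zero => simpa using h
      | succ b => simp [replicate_succ] at h
  | succ a ih =>
      intro b x y h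
      cases b with
      | zero => simp [replicate_succ] at h
      | succ b =>
          simp only [replicate_succ, cons_append, List.cons.injEq] at h
          obtain ⟨ha, hx⟩ := ih h.2
          exact ⟨by omega, hx⟩

open DyckStep in
theorem pad_inj {a b : ℕ} {x y : List DyckStep}
    (h : x ++ U :: List.replicate a D = y ++ U :: List.replicate b D) : x = y := by
  have h' := congrArg List.reverse h
  simp only [reverse_append, reverse_cons, reverse_replicate] at h'
  have h'' : List.replicate a D ++ U :: x.reverse = List.replicate b D ++ U :: y.reverse := by
    simpa using h'
  have := (replicate_pad_inj a h'').2
  exact List.reverse_injective this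

theorem catalan_mono : Monotone catalan := by
  apply monotone_nat_of_le_succ
  intro n
  rw [catalan_succ]
  calc catalan n = catalan ((0 : Fin n.succ) : ℕ) * catalan (n - (0 : Fin n.succ)) := by simp
  _ ≤ ∑ i : Fin n.succ, catalan i * catalan (n - i) :=
      Finset.single_le_sum (f := fun i : Fin n.succ => catalan i * catalan (n - i))
        (fun i _ => Nat.zero_le _) (Finset.mem_univ 0)

/-- Encode a push/pop as a Dyck step. -/
def boolToStep (b : Bool) : DyckStep := if b then DyckStep.U else DyckStep.D

theorem boolToStep_injective : Function.Injective boolToStep := by decide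

/-- The candidate Dyck word list associated to an operations list. -/
def toDyckList (j m : ℕ) (ops : List Bool) : List DyckStep :=
  (ops.drop j).map boolToStep ++ List.replicate (m - ops.count false) DyckStep.D

/-- Wrap a list as a Dyck word if possible. -/
noncomputable def mkDyck (l : List DyckStep) : DyckWord :=
  if h : l.count DyckStep.U = l.count DyckStep.D ∧
      ∀ i, (l.take i).count DyckStep.D ≤ (l.take i).count DyckStep.U
  then ⟨l, h.1, h.2⟩ else 0

open DyckStep in
theorem toDyckList_spec {j n : ℕ} {ops : List Bool} (hjn : j ≤ n)
    (h : ValidOps j ops n 0) :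
    (toDyckList j (n - j) ops).count U = n - j ∧
      (toDyckList j (n - j) ops).count D = n - j ∧
      (∀ i, ((toDyckList j (n - j) ops).take i).count D ≤
        ((toDyckList j (n - j) ops).take i).count U) := by
  set m := n - j with hm
  set d := ops.count false with hd
  -- take j = replicate
  have htake : ops.take j = List.replicate j true := by
    have := h.take_eq_replicate (by simpa using hjn)
    simpa using this
  have hsplit : List.replicate j true ++ ops.drop j = ops := by
    rw [← htake]; exact take_append_drop j ops
  have hv' : ValidOps j (ops.drop j) (n - j) j := by
    have := ValidOps.drop_replicate j (rest := ops.drop j) (u := n) (s := 0)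
      (by rw [hsplit]; exact h)
    simpa using this
  have hctd : (ops.drop j).count true = m := hv'.count_true
  have hcfd : (ops.drop j).count false = d := by
    conv_rhs => rw [hd, ← hsplit]
    simp [count_append, count_replicate]
  have hdm : d ≤ m := by
    rcases Nat.eq_zero_or_pos d with h0 | h0
    · omega
    · have := h.count_false_le (by omega)
      omega
  have hcU : ∀ i, ((ops.drop j).map boolToStep |>.take i).count U
      = ((ops.drop j).take i).count true := by
    intro i
    rw [← map_take]
    have : U = boolToStep true := rfl
    rw [this, count_map_of_injective _ _ boolToStep_injective]
  have hcD : ∀ i, ((ops.drop j).map boolToStep |>.take i).count D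
      = ((ops.drop j).take i).count false := by
    intro i
    rw [← map_take]
    have : D = boolToStep false := rfl
    rw [this, count_map_of_injective _ _ boolToStep_injective]
  have hlenmap : ((ops.drop j).map boolToStep).length = (ops.drop j).length := length_map _
  have hUfull : ((ops.drop j).map boolToStep).count U = m := by
    have := hcU ((ops.drop j).length)
    rwa [take_of_length_le (by omega), take_of_length_le (le_refl _), hctd] at this
  have hDfull : ((ops.drop j).map boolToStep).count D = d := by
    have := hcD ((ops.drop j).length)
    rwa [take_of_length_le (by omega), take_of_length_le (le_refl _), hcfd] at this
  refine ⟨?_, ?_, ?_⟩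
  · rw [toDyckList, count_append, hUfull, count_replicate]
    simp
  · rw [toDyckList, count_append, hDfull, count_replicate]
    simp only [beq_self_eq_true, if_true]
    omega
  · intro i
    rw [toDyckList, take_append, count_append, count_append]
    by_cases hi : i ≤ ((ops.drop j).map boolToStep).length
    · have h0 : i - ((ops.drop j).map boolToStep).length = 0 := by omega
      rw [h0]
      simp only [take_zero, count_nil, add_zero]
      rw [hcU, hcD]
      have := hv'.count_prefix i
      simpa using this
    · rw [take_of_length_le (by omega), hUfull, hDfull]
      rw [take_replicate, count_replicate, count_replicate]
      simp only [beq_self_eq_true, if_true, reduceCtorEq, if_false, add_zero]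
      have : min (i - ((ops.drop j).map boolToStep).length) (m - d) ≤ m - d :=
        min_le_right _ _
      omega
open DyckStep in
theorem mkDyck_toList {l : List DyckStep} (h1 : l.count U = l.count D)
    (h2 : ∀ i, (l.take i).count D ≤ (l.take i).count U) : (mkDyck l).toList = l := by
  rw [mkDyck, dif_pos ⟨h1, h2⟩]

open DyckStep in
theorem toDyckList_inj {j n : ℕ} {ops1 ops2 : List Bool} (hjn : j < n)
    (h1 : ValidOps j ops1 n 0) (h2 : ValidOps j ops2 n 0)
    (he1 : ∃ l, ops1 = l ++ [true]) (he2 : ∃ l, ops2 = l ++ [true])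
    (heq : toDyckList j (n - j) ops1 = toDyckList j (n - j) ops2) : ops1 = ops2 := by
  obtain ⟨l1, rfl⟩ := he1
  obtain ⟨l2, rfl⟩ := he2
  have hlen1 : j ≤ l1.length := by
    have hc := h1.count_true
    have := List.count_le_length (a := (true : Bool)) (l := l1 ++ [true])
    simp only [length_append, length_cons, length_nil] at this
    omega
  have hlen2 : j ≤ l2.length := by
    have hc := h2.count_true
    have := List.count_le_length (a := (true : Bool)) (l := l2 ++ [true])
    simp only [length_append, length_cons, length_nil] at this
    omega
  have hd1 : (l1 ++ [true]).drop j = l1.drop j ++ [true] := by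
    rw [drop_append]
    have : j - l1.length = 0 := by omega
    rw [this, drop_zero]
  have hd2 : (l2 ++ [true]).drop j = l2.drop j ++ [true] := by
    rw [drop_append]
    have : j - l2.length = 0 := by omega
    rw [this, drop_zero]
  rw [toDyckList, toDyckList, hd1, hd2, map_append, map_append] at heq
  simp only [map_cons, map_nil] at heq
  have hU : boolToStep true = U := rfl
  rw [hU] at heq
  rw [append_assoc, append_assoc] at heq
  simp only [singleton_append] at heq
  have hmap := pad_inj heq
  have hdrop : l1.drop j = l2.drop j := map_injective_iff.mpr boolToStep_injective hmap
  have ht1 : (l1 ++ [true]).take j = List.replicate j true := by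
    have := h1.take_eq_replicate (s := 0) (by simpa using le_of_lt hjn)
    simpa using this
  have ht2 : (l2 ++ [true]).take j = List.replicate j true := by
    have := h2.take_eq_replicate (s := 0) (by simpa using le_of_lt hjn)
    simpa using this
  have e1 : (l1 ++ [true]).take j ++ (l1 ++ [true]).drop j = l1 ++ [true] :=
    take_append_drop _ _
  have e2 : (l2 ++ [true]).take j ++ (l2 ++ [true]).drop j = l2 ++ [true] :=
    take_append_drop _ _
  rw [← e1, ← e2, ht1, ht2, hd1, hd2, hdrop]
/-- If every pattern in `T` has length ≥ k, every permutation of length `n > k` has at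
most `C_{n-k+2}` preimages under `s_T`. -/
theorem stmt6 (T : Set (List ℕ)) (k n : ℕ) (hk : ∀ σ ∈ T, k ≤ σ.length)
    (hn : k < n) (π : List ℕ) (hπ : IsPermList π) (hlen : π.length = n) :
    {w : List ℕ | IsPermList w ∧ w.length = n ∧ sT T w = π}.ncard
      ≤ catalan (n - k + 2) := by
  classical
  set j := k - 2 with hj
  have hjn : j < n := by omega
  set m := n - j with hm
  set P := {w : List ℕ | IsPermList w ∧ w.length = n ∧ sT T w = π} with hP
  have key : ∀ w ∈ P, ValidOps j (trace6 T w []) n 0 ∧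
      (∃ l, trace6 T w [] = l ++ [true]) ∧ sT T w = applyOps (trace6 T w []) w [] := by
    intro w hw
    obtain ⟨-, hwl, hws⟩ := hw
    refine ⟨?_, ?_, ?_⟩
    · have := trace6_valid T k hk w []
      simpa [hwl, hj] using this
    · refine trace6_ends_true T w [] ?_
      intro h
      rw [h] at hwl
      simp at hwl
      omega
    · rw [sT, sTaux_eq_applyOps]
      simp
  have hcard : P.ncard ≤ catalan m := by
    rw [← Nat.card_coe_set_eq]
    have hinj : ∃ f : P → {p : DyckWord // p.semilength = m}, Function.Injective f := by
      refine ⟨fun w => ⟨mkDyck (toDyckList j m (trace6 T w.1 [])), ?_⟩, ?_⟩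
      · obtain ⟨hv, hend, happ⟩ := key w.1 w.2
        obtain ⟨hU, hD, hpre⟩ := toDyckList_spec (le_of_lt hjn) hv
        show (mkDyck _).toList.count DyckStep.U = m
        rw [hm, mkDyck_toList (by rw [hU, hD]) hpre, hU]
      · intro w1 w2 hfeq
        obtain ⟨hv1, hend1, happ1⟩ := key w1.1 w1.2
        obtain ⟨hv2, hend2, happ2⟩ := key w2.1 w2.2
        obtain ⟨hU1, hD1, hpre1⟩ := toDyckList_spec (le_of_lt hjn) hv1
        obtain ⟨hU2, hD2, hpre2⟩ := toDyckList_spec (le_of_lt hjn) hv2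
        simp only [Subtype.mk.injEq] at hfeq
        have hlists : toDyckList j m (trace6 T w1.1 []) = toDyckList j m (trace6 T w2.1 []) := by
          have := congrArg DyckWord.toList hfeq
          rwa [mkDyck_toList (by rw [hU1, hD1]) hpre1,
            mkDyck_toList (by rw [hU2, hD2]) hpre2] at this
        have hops : trace6 T w1.1 [] = trace6 T w2.1 [] :=
          toDyckList_inj hjn hv1 hv2 hend1 hend2 (by simpa [hm] using hlists)
        have hπ1 : applyOps (trace6 T w1.1 []) w1.1 [] = π := by
          rw [← happ1]; exact w1.2.2.2
        have hπ2 : applyOps (trace6 T w2.1 []) w2.1 [] = π := by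
          rw [← happ2]; exact w2.2.2.2
        have hl1 : (w1.1).length = n := w1.2.2.1
        have hl2 : (w2.1).length = n := w2.2.2.1
        have := applyOps_injOn j (trace6 T w1.1 []) w1.1 w2.1 [] []
          (by rw [hl1]; simpa using hv1)
          (by rw [hl2, hops]; simpa using hv2)
          (by rw [hπ1, hops, hπ2])
        exact Subtype.ext this.1
    obtain ⟨f, hf⟩ := hinj
    calc Nat.card P ≤ Nat.card {p : DyckWord // p.semilength = m} :=
          Nat.card_le_card_of_injective f hf
    _ = Fintype.card {p : DyckWord // p.semilength = m} := Nat.card_eq_fintype_card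
    _ = catalan m := DyckWord.card_dyckWord_semilength_eq_catalan m
  refine hcard.trans (catalan_mono ?_)
  omega
end

section
/- Let σ be a permutation of length k whose first two entries are not consecutive integers. Then for every n > k, every permutation of length n has strictly fewer than C_{n−k+2} preimages under s_{σ}. -/
open List

attribute [local instance] Classical.propDecidable

section Aux

noncomputable def prof (T : Set (List ℕ)) : List ℕ → List ℕ → List ℕ
  | [], _stack => []
  | x :: rest, stack =>
    if AvoidsSet T (x :: stack) then 0 :: prof T rest (x :: stack)
    else
      match stack with
      | [] => 0 :: prof T rest [x]
      | _y :: s =>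
        match prof T (x :: rest) s with
        | [] => [1]
        | c :: cs => (c + 1) :: cs
termination_by input stack => 2 * input.length + stack.length
decreasing_by all_goals first | (simp_wf; omega) | omega | simp_wf

def Merge : List ℕ → List ℕ → List ℕ → List ℕ
  | st, [], _ => st
  | st, x :: inp, [] => (x :: inp) ++ st
  | st, x :: inp, 0 :: ds => Merge (x :: st) inp ds
  | [], x :: inp, (_e+1) :: _ds => x :: inp
  | y :: st, x :: inp, (e+1) :: ds => y :: Merge st (x :: inp) (e :: ds)
termination_by st inp _ => 2 * inp.length + st.length

lemma prof_length (T : Set (List ℕ)) : ∀ inp st, (prof T inp st).length = inp.length := by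
  intro inp st
  induction inp, st using prof.induct T with
  | case1 => simp [prof]
  | case2 x rest stack h ih =>
      rw [prof.eq_def]; simp only [if_pos h]; simpa using ih
  | case3 x rest h ih =>
      rw [prof.eq_def]; simp only [if_neg h]; simpa using ih
  | case4 x rest y s heq h ih =>
      rw [prof.eq_def]; simp only [h, if_false, heq]
      rw [heq] at ih; simp at ih
  | case5 x rest y s c cs heq h ih =>
      rw [prof.eq_def]; simp only [h, if_false, heq]
      rw [heq] at ih; simpa using ih

lemma prof_ne_nil (T : Set (List ℕ)) (x : ℕ) (rest st : List ℕ) :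
    prof T (x :: rest) st ≠ [] := by
  have := prof_length T (x :: rest) st
  intro h; rw [h] at this; simp at this

lemma sTaux_eq (T : Set (List ℕ)) :
    ∀ inp st out, sTaux T inp st out = out ++ Merge st inp (prof T inp st) := by
  intro inp st out
  induction inp, st, out using sTaux.induct T with
  | case1 st out => rw [sTaux.eq_def, prof.eq_def]; simp [Merge]
  | case2 x rest st out h ih =>
      rw [sTaux.eq_def, prof.eq_def]
      simp only [if_pos h]
      rw [ih, Merge]
  | case3 x rest out h ih =>
      rw [sTaux.eq_def, prof.eq_def]
      simp only [h, if_false]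
      rw [ih, Merge]
  | case4 x rest out y s h ih =>
      rw [sTaux.eq_def, prof.eq_def]
      simp only [h, if_false]
      obtain ⟨c, cs, hcs⟩ : ∃ c cs, prof T (x :: rest) s = c :: cs := by
        rcases hp : prof T (x :: rest) s with - | ⟨c, cs⟩
        · exact absurd hp (prof_ne_nil T x rest s)
        · exact ⟨c, cs, rfl⟩
      rw [hcs, ih, hcs, Merge]
      simp

lemma merge_inj : ∀ N st1 st2 in1 in2 d,
    2 * in1.length + st1.length ≤ N →
    st1.length = st2.length → in1.length = in2.length →
    Merge st1 in1 d = Merge st2 in2 d → in1 = in2 ∧ st1 = st2 := by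
  intro N
  induction N with
  | zero =>
      intro st1 st2 in1 in2 d hN hst hin h
      match in1, in2, st1, st2 with
      | [], [], [], [] => exact ⟨rfl, rfl⟩
      | [], [], _ :: _, st2 => simp at hN
      | _ :: _, _, _, _ => simp at hN
  | succ N ih =>
      intro st1 st2 in1 in2 d hN hst hin h
      match in1, in2 with
      | [], [] => rw [Merge, Merge] at h; exact ⟨rfl, h⟩
      | [], _ :: _ => simp at hin
      | _ :: _, [] => simp at hin
      | x1 :: r1, x2 :: r2 =>
        match d with
        | [] =>
            rw [Merge, Merge] at h
            have := List.append_inj h (by simpa using hin)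
            exact ⟨this.1, this.2⟩
        | 0 :: ds =>
            rw [Merge, Merge] at h
            have := ih (x1 :: st1) (x2 :: st2) r1 r2 ds
              (by simp at hN ⊢; omega) (by simpa using hst) (by simpa using hin) h
            obtain ⟨h1, h2⟩ := this
            rw [List.cons.injEq] at h2
            exact ⟨by rw [h1, h2.1], h2.2⟩
        | (e+1) :: ds =>
            match st1, st2 with
            | [], [] => rw [Merge, Merge] at h; exact ⟨h, rfl⟩
            | [], _ :: _ => simp at hst
            | _ :: _, [] => simp at hst
            | y1 :: s1, y2 :: s2 =>
                rw [Merge, Merge] at h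
                rw [List.cons.injEq] at h
                have := ih s1 s2 (x1 :: r1) (x2 :: r2) (e :: ds)
                  (by simp at hN ⊢; omega) (by simpa using hst) hin h.2
                exact ⟨this.1, by rw [h.1, this.2]⟩

lemma contains_length {u p : List ℕ} (h : Contains u p) : p.length ≤ u.length := by
  obtain ⟨v, hv, hlen, -⟩ := h
  exact hlen ▸ hv.length_le

lemma not_avoids_singleton {σ u : List ℕ} (h : ¬ AvoidsSet {σ} u) : Contains u σ := by
  by_contra hc
  exact h (fun p hp => by rw [Set.mem_singleton_iff] at hp; rw [hp]; exact hc)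

lemma prof_take_sum (σ : List ℕ) (k : ℕ) (hk : σ.length = k) :
    ∀ inp st i, ((prof {σ} inp st).take i).sum + (k - 1) ≤ max (st.length + i) (k - 1) := by
  intro inp st
  induction inp, st using prof.induct {σ} with
  | case1 st =>
      intro i; rw [prof.eq_def]; simp
  | case2 x rest st h ih =>
      intro i
      rw [prof.eq_def]; simp only [if_pos h]
      match i with
      | 0 => simp
      | j + 1 =>
          have := ih j
          simp only [List.take_succ_cons, List.sum_cons, Nat.zero_add]
          simp only [List.length_cons] at this
          omega
  | case3 x rest h ih =>
      intro i
      rw [prof.eq_def]; simp only [h, if_false]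
      match i with
      | 0 => simp
      | j + 1 =>
          have := ih j
          simp only [List.take_succ_cons, List.sum_cons, Nat.zero_add]
          simp only [List.length_cons, List.length_nil] at this ⊢
          omega
  | case4 x rest y s heq h ih =>
      exact absurd heq (prof_ne_nil _ x rest s)
  | case5 x rest y s c cs heq h ih =>
      intro i
      have hlen : k ≤ (x :: y :: s).length := by
        rw [← hk]; exact contains_length (not_avoids_singleton h)
      simp only [List.length_cons] at hlen
      rw [prof.eq_def]; simp only [h, if_false, heq]
      match i with
      | 0 => simp
      | j + 1 =>
          have := ih (j + 1)
          rw [heq] at this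
          simp only [List.take_succ_cons, List.sum_cons, List.length_cons] at this ⊢
          omega

lemma prof_pushrun (σ : List ℕ) :
    ∀ j inp st, j ≤ inp.length → st.length + j < σ.length →
    prof {σ} inp st =
      List.replicate j 0 ++ prof {σ} (inp.drop j) ((inp.take j).reverse ++ st) := by
  intro j
  induction j with
  | zero => intro inp st _ _; simp
  | succ j ih =>
      intro inp st hj hlt
      match inp with
      | [] => simp at hj
      | x :: rest =>
          have havoid : AvoidsSet {σ} (x :: st) := by
            by_contra hc
            have := contains_length (not_avoids_singleton hc)
            simp only [List.length_cons] at this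
            omega
          rw [prof.eq_def]; simp only [if_pos havoid]
          rw [ih rest (x :: st) (by simpa using hj) (by simp; omega)]
          simp [List.replicate_succ, List.append_assoc]

lemma ordIso_of_contains_length {u σ : List ℕ} (h : Contains u σ)
    (hlen : u.length = σ.length) : OrdIso u σ := by
  obtain ⟨v, hv, hiso⟩ := h
  have hvlen : v.length = u.length := by rw [hiso.1, hlen]
  rwa [hv.eq_of_length hvlen] at hiso

lemma sigma_adjacent (σ : List ℕ) (k : ℕ) (hσ : IsPermList σ) (hk : σ.length = k)
    (h2 : 2 ≤ k)
    (key : ∀ j, 2 ≤ j → j < k → (σ.getD 0 0 < σ.getD j 0 ↔ σ.getD 1 0 < σ.getD j 0)) :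
    σ.getD 0 0 + 1 = σ.getD 1 0 ∨ σ.getD 1 0 + 1 = σ.getD 0 0 := by
  unfold IsPermList at hσ
  rw [hk] at hσ
  have hnd : σ.Nodup := hσ.symm.nodup (List.nodup_range' (h := Nat.one_pos))
  have h0 : 0 < σ.length := by omega
  have h1 : 1 < σ.length := by omega
  have hmem : ∀ v, v ∈ σ ↔ (1 ≤ v ∧ v < 1 + k) := by
    intro v
    rw [hσ.mem_iff, List.mem_range'_1]
  have hmem' : ∀ v, (1 ≤ v ∧ v < 1 + k) → ∃ j, j < k ∧ σ.getD j 0 = v := by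
    intro v hv
    obtain ⟨j, hj, hjv⟩ := List.mem_iff_getElem.mp ((hmem v).mpr hv)
    exact ⟨j, by omega, by rw [List.getD_eq_getElem σ 0 hj, hjv]⟩
  have hAmem := (hmem (σ.getD 0 0)).mp
    (List.getD_eq_getElem σ 0 h0 ▸ σ.getElem_mem h0)
  have hBmem := (hmem (σ.getD 1 0)).mp
    (List.getD_eq_getElem σ 0 h1 ▸ σ.getElem_mem h1)
  have hne : σ.getD 0 0 ≠ σ.getD 1 0 := by
    rw [List.getD_eq_getElem σ 0 h0, List.getD_eq_getElem σ 0 h1]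
    intro hc
    have := (List.Nodup.getElem_inj_iff hnd).mp hc
    simp at this
  by_contra hcon
  push_neg at hcon
  rcases Nat.lt_or_ge (σ.getD 0 0) (σ.getD 1 0) with hlt | hge
  · have hA1 : σ.getD 0 0 + 1 < σ.getD 1 0 := Nat.lt_of_le_of_ne hlt hcon.1
    obtain ⟨j, hjk, hgd⟩ := hmem' (σ.getD 0 0 + 1) ⟨by omega, by omega⟩
    have hj0 : j ≠ 0 := by intro hc; rw [hc] at hgd; omega
    have hj1 : j ≠ 1 := by intro hc; rw [hc] at hgd; omega
    have := (key j (by omega) hjk).mp (by omega)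
    omega
  · have hlt : σ.getD 1 0 < σ.getD 0 0 := by omega
    have hB1 : σ.getD 1 0 + 1 < σ.getD 0 0 := Nat.lt_of_le_of_ne hlt hcon.2
    obtain ⟨j, hjk, hgd⟩ := hmem' (σ.getD 1 0 + 1) ⟨by omega, by omega⟩
    have hj0 : j ≠ 0 := by intro hc; rw [hc] at hgd; omega
    have hj1 : j ≠ 1 := by intro hc; rw [hc] at hgd; omega
    have := (key j (by omega) hjk).mpr (by omega)
    omega

lemma no_bad (σ : List ℕ) (k : ℕ) (hσ : IsPermList σ) (hk : σ.length = k)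
    (h3 : 3 ≤ k)
    (hcons : σ.getD 0 0 + 1 ≠ σ.getD 1 0 ∧ σ.getD 1 0 + 1 ≠ σ.getD 0 0)
    (w : List ℕ) (r : ℕ)
    (hw : prof {σ} w [] = List.replicate (k-1) 0 ++ 1 :: 1 :: List.replicate r 0) :
    False := by
  have hwlen : w.length = (k-1) + (2 + r) := by
    have := prof_length {σ} w []
    rw [hw] at this
    simp at this
    omega
  have hpr := prof_pushrun σ (k-1) w [] (by omega) (by simp [hk]; omega)
  rw [hpr] at hw
  have h1 := List.append_cancel_left hw
  simp only [List.append_nil] at h1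
  have hslen : ((w.take (k-1)).reverse).length = k - 1 := by
    simp only [List.length_reverse, List.length_take]
    omega
  have hdlen : (w.drop (k-1)).length = 2 + r := by
    simp only [List.length_drop]
    omega
  rcases hS : (w.take (k-1)).reverse with - | ⟨y, s⟩
  · rw [hS] at hslen; simp at hslen; omega
  rcases hS2 : s with - | ⟨z, s'⟩
  · rw [hS, hS2] at hslen; simp at hslen; omega
  rcases hW : w.drop (k-1) with - | ⟨a, w''⟩
  · rw [hW] at hdlen; simp at hdlen; omega
  rcases hW2 : w'' with - | ⟨b, w'''⟩
  · rw [hW, hW2] at hdlen; simp at hdlen; omega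
  rw [hS, hS2, hW, hW2] at h1
  rw [hS, hS2] at hslen
  simp only [List.length_cons] at hslen
  have hs'len : s'.length = k - 3 := by omega
  -- step k : reading a with stack y :: z :: s'
  by_cases hav : AvoidsSet {σ} (a :: y :: z :: s')
  · rw [prof.eq_def] at h1
    simp only [if_pos hav] at h1
    simp at h1
  have hC1 : Contains (a :: y :: z :: s') σ := not_avoids_singleton hav
  rw [prof.eq_def] at h1
  simp only [if_neg hav] at h1
  rcases hq : prof {σ} (a :: b :: w''') (z :: s') with - | ⟨c, cs⟩
  · exact prof_ne_nil _ _ _ _ hq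
  rw [hq] at h1
  simp only [List.cons.injEq] at h1
  obtain ⟨hc1, hcs⟩ := h1
  have hc0 : c = 0 := by omega
  -- the inner call must have taken the push branch
  by_cases hav2 : AvoidsSet {σ} (a :: z :: s')
  swap
  · rcases hq2 : prof {σ} (a :: b :: w''') s' with - | ⟨c', cs'⟩
    · exact prof_ne_nil _ _ _ _ hq2
    · rw [prof.eq_def] at hq
      simp only [if_neg hav2, hq2] at hq
      simp only [List.cons.injEq] at hq
      omega
  rw [prof.eq_def] at hq
  simp only [if_pos hav2] at hq
  simp only [List.cons.injEq] at hq
  have hq3 : prof {σ} (b :: w''') (a :: z :: s') = 1 :: List.replicate r 0 := by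
    rw [hq.2, hcs]
  -- step k+1 : reading b with stack a :: z :: s'
  by_cases hav3 : AvoidsSet {σ} (b :: a :: z :: s')
  · rw [prof.eq_def] at hq3
    simp only [if_pos hav3] at hq3
    simp at hq3
  have hC2 : Contains (b :: a :: z :: s') σ := not_avoids_singleton hav3
  have hlen1 : (a :: y :: z :: s').length = σ.length := by
    simp only [List.length_cons, hk]; omega
  have hlen2 : (b :: a :: z :: s').length = σ.length := by
    simp only [List.length_cons, hk]; omega
  have O1 := ordIso_of_contains_length hC1 hlen1
  have O2 := ordIso_of_contains_length hC2 hlen2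
  have key : ∀ j, 2 ≤ j → j < k → (σ.getD 0 0 < σ.getD j 0 ↔ σ.getD 1 0 < σ.getD j 0) := by
    intro j h2j hjk
    obtain ⟨j', rfl⟩ : ∃ j', j = j' + 2 := ⟨j - 2, by omega⟩
    have hl1 : (a :: y :: z :: s').length = k := by rw [hlen1, hk]
    have hl2 : (b :: a :: z :: s').length = k := by rw [hlen2, hk]
    have e1 := O1.2 0 (j' + 2) (by omega) (by omega)
    have e2 := O2.2 1 (j' + 2) (by omega) (by omega)
    simp only [List.getD_cons_zero, List.getD_cons_succ] at e1 e2
    exact e1.symm.trans e2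
  rcases sigma_adjacent σ k hσ hk (by omega) key with h | h
  · exact hcons.1 h
  · exact hcons.2 h

open DyckStep

def encB (d : List ℕ) : List DyckStep := d.flatMap (fun t => List.replicate t D ++ [U])

def enc (d : List ℕ) : List DyckStep :=
  U :: (encB d ++ List.replicate (d.length + 1 - d.sum) D)

@[simp] lemma encB_nil : encB [] = [] := rfl
lemma encB_cons (t : ℕ) (rest : List ℕ) :
    encB (t :: rest) = (List.replicate t D ++ [U]) ++ encB rest := by
  simp [encB]

lemma encB_length (d : List ℕ) : (encB d).length = d.length + d.sum := by
  induction d with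
  | nil => simp
  | cons t rest ih => simp [encB_cons, ih]; omega

lemma encB_count_U (d : List ℕ) : (encB d).count U = d.length := by
  induction d with
  | nil => simp
  | cons t rest ih => simp [encB_cons, ih, List.count_replicate]

lemma encB_count_D (d : List ℕ) : (encB d).count D = d.sum := by
  induction d with
  | nil => simp
  | cons t rest ih => simp [encB_cons, ih, List.count_replicate]

lemma encB_getLast (d : List ℕ) (h : d ≠ []) : (encB d).getLast? = some U := by
  induction d with
  | nil => simp at h
  | cons t rest ih =>
      rcases eq_or_ne rest [] with rfl | hne
      · simp only [encB_cons, encB_nil, List.append_nil]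
        exact List.getLast?_concat
      · rw [encB_cons, List.getLast?_append, ih hne]
        rfl

lemma block_inj : ∀ (a b : ℕ) (X Y : List DyckStep),
    List.replicate a D ++ U :: X = List.replicate b D ++ U :: Y → a = b ∧ X = Y := by
  intro a
  induction a with
  | zero =>
      intro b X Y h
      match b with
      | 0 => simpa using h
      | b + 1 => rw [List.replicate_succ] at h; simp at h
  | succ a ih =>
      intro b X Y h
      match b with
      | 0 => rw [List.replicate_succ] at h; simp at h
      | b + 1 =>
          rw [List.replicate_succ, List.replicate_succ] at h
          simp only [List.cons_append, List.cons.injEq, true_and] at h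
          obtain ⟨h1, h2⟩ := ih b X Y h
          exact ⟨by omega, h2⟩

lemma encB_inj : ∀ (d1 d2 : List ℕ), d1.length = d2.length →
    encB d1 = encB d2 → d1 = d2 := by
  intro d1
  induction d1 with
  | nil =>
      intro d2 h _
      have : d2 = [] := List.length_eq_zero_iff.mp (by simpa using h.symm)
      rw [this]
  | cons t rest ih =>
      intro d2 hlen henc
      match d2 with
      | [] => simp at hlen
      | t2 :: rest2 =>
          rw [encB_cons, encB_cons] at henc
          simp only [List.append_assoc, List.singleton_append] at henc
          obtain ⟨h1, h2⟩ := block_inj t t2 _ _ henc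
          have := ih rest2 (by simpa using hlen) h2
          rw [h1, this]

lemma replD_getLast (X : List DyckStep) (e : ℕ) (he : e ≠ 0) :
    (X ++ List.replicate e D).getLast? = some D := by
  obtain ⟨e', rfl⟩ : ∃ e', e = e' + 1 := ⟨e - 1, by omega⟩
  rw [List.replicate_succ', ← List.append_assoc]
  exact List.getLast?_concat

lemma enc_inj (d1 d2 : List ℕ) (hne : d1 ≠ []) (hlen : d1.length = d2.length)
    (hs1 : d1.sum ≤ d1.length) (hs2 : d2.sum ≤ d2.length)
    (h : enc d1 = enc d2) : d1 = d2 := by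
  unfold enc at h
  simp only [List.cons.injEq, true_and] at h
  -- first, sums are equal
  have hsum : d1.sum = d2.sum := by
    by_contra hss
    rcases Nat.lt_or_ge d1.sum d2.sum with hlt | hge
    · -- encB d1 shorter, so encB d2 = encB d1 ++ (D's)
      have hl : (encB d1).length ≤ (encB d2).length := by
        rw [encB_length, encB_length]; omega
      have hpre : encB d2 = encB d1 ++
          (List.replicate (d1.length + 1 - d1.sum) D).take ((encB d2).length - (encB d1).length) := by
        have := congrArg (List.take (encB d2).length) h
        rw [List.take_append, List.take_append] at this
        rw [List.take_of_length_le hl, List.take_length] at this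
        simp only [Nat.sub_self, List.take_zero, List.append_nil] at this
        exact this.symm
      rw [List.take_replicate] at hpre
      have hd2ne : d2 ≠ [] := by
        intro hc; rw [hc] at hlen; simp at hlen; exact hne hlen
      have hU := encB_getLast d2 hd2ne
      rw [hpre, replD_getLast] at hU
      · simp at hU
      · rw [encB_length, encB_length] at hl ⊢
        have : (encB d2).length - (encB d1).length ≠ 0 := by
          rw [encB_length, encB_length]; omega
        rw [encB_length, encB_length] at this
        omega
    · have hlt : d2.sum < d1.sum := by omega
      have hl : (encB d2).length ≤ (encB d1).length := by
        rw [encB_length, encB_length]; omega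
      have hpre : encB d1 = encB d2 ++
          (List.replicate (d2.length + 1 - d2.sum) D).take ((encB d1).length - (encB d2).length) := by
        have := congrArg (List.take (encB d1).length) h.symm
        rw [List.take_append, List.take_append] at this
        rw [List.take_of_length_le hl, List.take_length] at this
        simp only [Nat.sub_self, List.take_zero, List.append_nil] at this
        exact this.symm
      rw [List.take_replicate] at hpre
      have hU := encB_getLast d1 hne
      rw [hpre, replD_getLast] at hU
      · simp at hU
      · have : (encB d1).length - (encB d2).length ≠ 0 := by
          rw [encB_length, encB_length]; omega
        omega
  have hBlen : (encB d1).length = (encB d2).length := by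
    rw [encB_length, encB_length, hlen, hsum]
  have := List.append_inj h hBlen
  exact encB_inj d1 d2 hlen this.1

lemma count_take_singleton_U (m : ℕ) :
    (List.take m [U]) = List.replicate (min m 1) U := by
  rw [show [U] = List.replicate 1 U from rfl, List.take_replicate]

lemma encB_prefix : ∀ (d : List ℕ) (c : ℕ),
    (∀ j, (d.take j).sum ≤ j + c) →
    ∀ i, ((encB d ++ List.replicate (c + 1 + d.length - d.sum) D).take i).count D ≤
      ((encB d ++ List.replicate (c + 1 + d.length - d.sum) D).take i).count U + (c + 1) := by
  intro d
  induction d with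
  | nil =>
      intro c _ i
      simp only [encB_nil, List.nil_append, List.length_nil, List.sum_nil, Nat.add_zero,
        Nat.sub_zero, List.take_replicate, List.count_replicate]
      simp
  | cons t rest ih =>
      intro c hb i
      have ht : t ≤ c + 1 := by
        have := hb 1
        simp at this
        omega
      have htot : t + rest.sum ≤ 1 + rest.length + c := by
        have := hb (t :: rest).length
        rw [List.take_length] at this
        simp at this
        omega
      have harr : c + 1 + (t :: rest).length - (t :: rest).sum
          = (c + 1 - t) + 1 + rest.length - rest.sum := by
        simp only [List.length_cons, List.sum_cons]
        omega
      have hrest : ∀ j, (rest.take j).sum ≤ j + (c + 1 - t) := by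
        intro j
        have := hb (j + 1)
        simp only [List.take_succ_cons, List.sum_cons] at this
        omega
      rw [harr, encB_cons]
      rw [List.append_assoc]
      rw [List.take_append, List.take_append]
      have := ih (c + 1 - t) hrest (i - (t + 1))
      simp only [List.count_append, List.take_replicate, List.count_replicate,
        count_take_singleton_U, List.length_append, List.length_replicate,
        List.length_cons, List.length_nil]
      norm_num
      simp only [show (U = D) ↔ False by simp, show (D = U) ↔ False by simp, if_false]
      rcases le_or_gt i t with hit | hit
      · rw [show i - (t + 1) = 0 by omega]
        simp
        omega
      · omega

lemma enc_count_U (d : List ℕ) : (enc d).count U = d.length + 1 := by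
  unfold enc
  rw [List.count_cons_self, List.count_append, encB_count_U, List.count_replicate]
  simp

lemma enc_count_D (d : List ℕ) : (enc d).count D = d.sum + (d.length + 1 - d.sum) := by
  unfold enc
  rw [List.count_cons_of_ne (by simp), List.count_append, encB_count_D, List.count_replicate]
  simp

noncomputable def mkD (d : List ℕ) (hb : ∀ j, (d.take j).sum ≤ j) : DyckWord where
  toList := enc d
  count_U_eq_count_D := by
    have hs : d.sum ≤ d.length := by
      have := hb d.length
      rwa [List.take_length] at this
    rw [enc_count_U, enc_count_D]
    omega
  count_D_le_count_U := by
    intro i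
    match i with
    | 0 => simp
    | i + 1 =>
        have := encB_prefix d 0 (fun j => by simpa using hb j) i
        rw [show 0 + 1 + d.length - d.sum = d.length + 1 - d.sum by omega] at this
        rw [show enc d = U :: (encB d ++ List.replicate (d.length + 1 - d.sum) D) from rfl]
        rw [List.take_succ_cons]
        rw [List.count_cons_self, List.count_cons_of_ne (by simp)]
        omega

lemma mkD_semilength (d : List ℕ) (hb : ∀ j, (d.take j).sum ≤ j) :
    (mkD d hb).semilength = d.length + 1 := by
  unfold DyckWord.semilength
  rw [show (mkD d hb).toList = enc d from rfl, enc_count_U]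

lemma mkD_toList (d : List ℕ) (hb : ∀ j, (d.take j).sum ≤ j) :
    (mkD d hb).toList = enc d := rfl

end Aux

/-- If the first two entries of `σ` (of length `k`) are not consecutive integers, then
for every `n > k` every permutation of length `n` has strictly fewer than `C_{n-k+2}`
preimages under `s_{σ}`. -/
theorem stmt11 (σ : List ℕ) (k : ℕ) (hσ : IsPermList σ) (hk : σ.length = k)
    (h2 : 2 ≤ k)
    (hcons : σ.getD 0 0 + 1 ≠ σ.getD 1 0 ∧ σ.getD 1 0 + 1 ≠ σ.getD 0 0)
    (n : ℕ) (hn : k < n) (π : List ℕ) (hπ : IsPermList π) (hlen : π.length = n) :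
    {w : List ℕ | IsPermList w ∧ w.length = n ∧ sT {σ} w = π}.ncard
      < catalan (n - k + 2) := by
  classical
  have hk3 : 3 ≤ k := by
    by_contra hlt
    have key : ∀ j, 2 ≤ j → j < k → (σ.getD 0 0 < σ.getD j 0 ↔ σ.getD 1 0 < σ.getD j 0) := by
      intro j hj hjk
      omega
    rcases sigma_adjacent σ k hσ hk h2 key with h | h
    · exact hcons.1 h
    · exact hcons.2 h
  -- ballot condition for the dropped profile, for every word
  have ballot : ∀ w : List ℕ, ∀ j, (((prof {σ} w []).drop (k-1)).take j).sum ≤ j := by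
    intro w j
    have h0 := prof_take_sum σ k hk w [] (k-1)
    have hj := prof_take_sum σ k hk w [] (k-1+j)
    simp only [List.length_nil, Nat.zero_add, max_self] at h0
    simp only [List.length_nil, Nat.zero_add] at hj
    rw [max_eq_left (by omega)] at hj
    rw [List.take_add, List.sum_append] at hj
    omega
  have S0 : ∀ w : List ℕ, ((prof {σ} w []).take (k-1)).sum = 0 := by
    intro w
    have h0 := prof_take_sum σ k hk w [] (k-1)
    simp only [List.length_nil, Nat.zero_add, max_self] at h0
    omega
  set F : List ℕ → DyckWord := fun w => mkD ((prof {σ} w []).drop (k-1)) (ballot w) with hF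
  have badballot : ∀ j, ((1 :: 1 :: List.replicate (n-k-1) 0).take j).sum ≤ j := by
    intro j
    match j with
    | 0 => simp
    | 1 => simp
    | (j+2) =>
        simp only [List.take_succ_cons, List.sum_cons, List.take_replicate,
          List.sum_replicate, smul_zero]
        omega
  set badD : DyckWord := mkD (1 :: 1 :: List.replicate (n-k-1) 0) badballot with hbadD
  set C : Set DyckWord := {p : DyckWord | p.semilength = n - k + 2} with hC
  set t : Set DyckWord := {p : DyckWord | p.semilength = n - k + 2 ∧ p ≠ badD} with ht
  -- facts about elements of the preimage set
  have hPlen : ∀ w : List ℕ, w.length = n → (prof {σ} w []).length = n := by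
    intro w hw
    rw [prof_length, hw]
  have hddlen : ∀ w : List ℕ, w.length = n →
      ((prof {σ} w []).drop (k-1)).length = n - k + 1 := by
    intro w hw
    rw [List.length_drop, hPlen w hw]
    omega
  have hzeros : ∀ w : List ℕ, w.length = n →
      (prof {σ} w []).take (k-1) = List.replicate (k-1) 0 := by
    intro w hw
    apply List.eq_replicate_iff.mpr
    constructor
    · rw [List.length_take, hPlen w hw]
      omega
    · intro b hb
      have := S0 w
      rw [List.sum_eq_zero_iff] at this
      exact this b hb
  have hbadlen : (1 :: 1 :: List.replicate (n-k-1) 0).length = n - k + 1 := by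
    simp only [List.length_cons, List.length_replicate]
    omega
  have hsum_le : ∀ w : List ℕ, ((prof {σ} w []).drop (k-1)).sum ≤
      ((prof {σ} w []).drop (k-1)).length := by
    intro w
    have := ballot w ((prof {σ} w []).drop (k-1)).length
    rwa [List.take_length] at this
  have hbadsum : (1 :: 1 :: List.replicate (n-k-1) 0).sum ≤
      (1 :: 1 :: List.replicate (n-k-1) 0).length := by
    have := badballot (1 :: 1 :: List.replicate (n-k-1) 0).length
    rwa [List.take_length] at this
  -- the decoding step
  have hdecode : ∀ w : List ℕ, w.length = n →
      ∀ v : List ℕ, v.length = n →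
      (prof {σ} w []).drop (k-1) = (prof {σ} v []).drop (k-1) →
      prof {σ} w [] = prof {σ} v [] := by
    intro w hw v hv hdd
    have h1 := List.take_append_drop (k-1) (prof {σ} w [])
    have h2 := List.take_append_drop (k-1) (prof {σ} v [])
    rw [← h1, ← h2, hzeros w hw, hzeros v hv, hdd]
  have hMapsTo : ∀ w ∈ {w : List ℕ | IsPermList w ∧ w.length = n ∧ sT {σ} w = π}, F w ∈ t := by
    intro w hw
    obtain ⟨-, hwlen, hwsort⟩ := hw
    constructor
    · rw [hF]
      simp only
      rw [mkD_semilength, hddlen w hwlen]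
      try omega
    · intro hFb
      rw [hF, hbadD] at hFb
      simp only at hFb
      have henc : enc ((prof {σ} w []).drop (k-1)) = enc (1 :: 1 :: List.replicate (n-k-1) 0) := by
        have := congrArg DyckWord.toList hFb
        rwa [mkD_toList, mkD_toList] at this
      have hdd : (prof {σ} w []).drop (k-1) = 1 :: 1 :: List.replicate (n-k-1) 0 := by
        apply enc_inj _ _ _ _ (hsum_le w) hbadsum henc
        · intro hnil
          have := hddlen w hwlen
          rw [hnil] at this
          simp at this
          try omega
        · rw [hddlen w hwlen, hbadlen]
      have hfull : prof {σ} w [] = List.replicate (k-1) 0 ++ 1 :: 1 :: List.replicate (n-k-1) 0 := by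
        have h1 := List.take_append_drop (k-1) (prof {σ} w [])
        rw [← h1, hzeros w hwlen, hdd]
      exact no_bad σ k hσ hk hk3 hcons w (n-k-1) hfull
  have hInj : Set.InjOn F {w : List ℕ | IsPermList w ∧ w.length = n ∧ sT {σ} w = π} := by
    intro w1 hw1 w2 hw2 hF12
    obtain ⟨-, hl1, hs1⟩ := hw1
    obtain ⟨-, hl2, hs2⟩ := hw2
    rw [hF] at hF12
    simp only at hF12
    have henc := congrArg DyckWord.toList hF12
    rw [mkD_toList, mkD_toList] at henc
    have hdd : (prof {σ} w1 []).drop (k-1) = (prof {σ} w2 []).drop (k-1) := by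
      apply enc_inj _ _ _ _ (hsum_le w1) (hsum_le w2) henc
      · intro hnil
        have := hddlen w1 hl1
        rw [hnil] at this
        simp at this
        try omega
      · rw [hddlen w1 hl1, hddlen w2 hl2]
    have hprof : prof {σ} w1 [] = prof {σ} w2 [] := hdecode w1 hl1 w2 hl2 hdd
    have hm1 : sT {σ} w1 = Merge [] w1 (prof {σ} w1 []) := by
      unfold sT
      rw [sTaux_eq]
      simp
    have hm2 : sT {σ} w2 = Merge [] w2 (prof {σ} w2 []) := by
      unfold sT
      rw [sTaux_eq]
      simp
    have hMeq : Merge [] w1 (prof {σ} w1 []) = Merge [] w2 (prof {σ} w1 []) := by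
      rw [← hm1, hprof, ← hm2, hs1, hs2]
    exact (merge_inj (2 * w1.length) [] [] w1 w2 (prof {σ} w1 [])
      (by simp) rfl (by rw [hl1, hl2]) hMeq).1
  haveI : Finite ↥C :=
    inferInstanceAs (Finite {p : DyckWord // p.semilength = n - k + 2})
  haveI : Fintype ↥C := Fintype.ofFinite _
  have hCfin : C.Finite := C.toFinite
  have hbadC : badD ∈ C := by
    rw [hC, hbadD]
    simp only [Set.mem_setOf_eq]
    rw [mkD_semilength, hbadlen]
    try omega
  have htsubC : t ⊆ C := fun p hp => hp.1
  have htC : t ⊂ C := by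
    refine ⟨htsubC, fun hCt => ?_⟩
    exact (hCt hbadC).2 rfl
  have hcard : C.ncard = catalan (n - k + 2) := by
    rw [← DyckWord.card_dyckWord_semilength_eq_catalan (n - k + 2)]
    rw [← Nat.card_coe_set_eq, Nat.card_eq_fintype_card]
    exact Fintype.card_congr (Equiv.subtypeEquivRight (fun _ => Iff.rfl))
  calc {w : List ℕ | IsPermList w ∧ w.length = n ∧ sT {σ} w = π}.ncard
      ≤ t.ncard := Set.ncard_le_ncard_of_injOn F hMapsTo hInj (hCfin.subset htsubC)
    _ < C.ncard := Set.ncard_lt_ncard htC hCfin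
    _ = catalan (n - k + 2) := hcard
end
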